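/- Removing a block (the contiguous subsequence from some order's pickup to its own delivery, together with all events in between) from a route satisfying the LIFO and capacity constraints yields a route that again satisfies the LIFO and capacity constraints, provided the block is well-formed, i.e., every order with an event inside the block has both its pickup and delivery inside the block. -/

import Mathlib

/-- The LIFO (non-crossing) condition for a route given as a list of events
`(order, isPickup)`. -/
def LIFOCond {β : Type*} [DecidableEq β] (r : List (β × Bool)) : Prop :=
  ∀ i j : β, r.idxOf (i, true) < r.idxOf (j, true) →
    r.idxOf (i, false) ≤ r.idxOf (j, true) ∨
    r.idxOf (j, false) ≤ r.idxOf (i, false)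

/-- The load after the length-`p` prefix of route `r`. -/
def prefLoad {β : Type*} (q : β → ℝ) (r : List (β × Bool)) (p : ℕ) : ℝ :=
  ((r.take p).map (fun e => if e.2 then q e.1 else -q e.1)).sum

/-- The capacity constraint: every prefix load is at most `Q`. -/
def CapacityOK {β : Type*} (q : β → ℝ) (r : List (β × Bool)) (Q : ℝ) : Prop :=
  ∀ p : ℕ, prefLoad q r p ≤ Q


namespace Stmt7

variable {γ : Type*} [DecidableEq γ]

lemma idx_le {l : List γ} {x : γ} {k : ℕ} (hk : k < l.length) (hx : l[k] = x) :
    l.idxOf x ≤ k := by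
  by_contra h
  push_neg at h
  have := List.not_of_lt_findIdx (p := (· == x)) (xs := l) (i := k) h
  simp [hx] at this

lemma idx_eq {l : List γ} {x : γ} (hc : l.count x = 1) {k : ℕ} (hk : k < l.length)
    (hx : l[k] = x) : l.idxOf x = k := by
  have h1 : l.idxOf x ≤ k := idx_le hk hx
  rcases h1.lt_or_eq with h | h
  · exfalso
    -- two occurrences: at indexOf and at k
    have hmem : x ∈ l := hx ▸ List.getElem_mem hk
    have hil : l.idxOf x < l.length := List.idxOf_lt_length_iff.2 hmem
    have hget : l[l.idxOf x] = x := List.getElem_idxOf hil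
    have hsplit : l = l.take k ++ l.drop k := (List.take_append_drop k l).symm
    have hdrop : l.drop k = x :: l.drop (k+1) := by
      rw [List.drop_eq_getElem_cons hk, hx]
    have hmem1 : x ∈ l.take k := by
      have hh : (l.take k)[l.idxOf x]'(by simp; omega) = x := by
        simp [hget]
      exact hh ▸ List.getElem_mem _
    have h2 : 2 ≤ l.count x := by
      rw [hsplit, List.count_append, hdrop]
      have := List.count_pos_iff.2 hmem1
      simp only [List.count_cons_self]
      omega
    omega
  · exact h

lemma mem_take_iff {l : List γ} {x : γ} (hc : l.count x = 1) {s : ℕ} :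
    x ∈ l.take s ↔ l.idxOf x < s := by
  constructor
  · intro h
    obtain ⟨i, hi, hx⟩ := List.getElem_of_mem h
    have hi' : i < l.length := lt_of_lt_of_le hi (by simp)
    have : l.idxOf x = i := idx_eq hc hi' (by simpa using hx)
    have : l.idxOf x < s := by
      rw [this]; simpa using lt_of_lt_of_le hi (by simp [Nat.min_le_left])
    exact this
  · intro h
    have hmem : x ∈ l := by
      by_contra hm
      rw [List.idxOf_of_notMem hm] at h
      exact absurd hc (by simp [List.count_eq_zero_of_not_mem hm])
    have hil : l.idxOf x < l.length := List.idxOf_lt_length_iff.2 hmem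
    have : (l.take s)[l.idxOf x]'(by simp; omega) = x := by
      simp [List.getElem_idxOf hil]
    exact this ▸ List.getElem_mem _

lemma mem_drop_iff {l : List γ} {x : γ} (hc : l.count x = 1) {s : ℕ}
    (hmem : x ∈ l) : x ∈ l.drop s ↔ s ≤ l.idxOf x := by
  constructor
  · intro h
    obtain ⟨i, hi, hx⟩ := List.getElem_of_mem h
    have hi' : s + i < l.length := by simp at hi; omega
    have : l.idxOf x = s + i := idx_eq hc hi' (by simpa using hx)
    omega
  · intro h
    have hil : l.idxOf x < l.length := List.idxOf_lt_length_iff.2 hmem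
    have : (l.drop s)[l.idxOf x - s]'(by simp; omega) = x := by
      have : s + (l.idxOf x - s) = l.idxOf x := by omega
      simp [this, List.getElem_idxOf hil]
    exact this ▸ List.getElem_mem _

lemma idx_drop {l : List γ} {x : γ} (hc : l.count x = 1) {s : ℕ}
    (hmem : x ∈ l) (h : s ≤ l.idxOf x) :
    (l.drop s).idxOf x = l.idxOf x - s := by
  have hil : l.idxOf x < l.length := List.idxOf_lt_length_iff.2 hmem
  have hcd : (l.drop s).count x = 1 := by
    have hle : (l.drop s).count x ≤ l.count x := (List.drop_sublist s l).count_le x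
    have hpos : 0 < (l.drop s).count x :=
      List.count_pos_iff.2 ((mem_drop_iff hc hmem).2 h)
    omega
  refine idx_eq hcd (by simp; omega) ?_
  have hadd : s + (l.idxOf x - s) = l.idxOf x := by omega
  simp [hadd, List.getElem_idxOf hil]

lemma idx_take {l : List γ} {x : γ} (hc : l.count x = 1) {s : ℕ}
    (h : l.idxOf x < s) : (l.take s).idxOf x = l.idxOf x := by
  have hmem : x ∈ l := by
    by_contra hm
    rw [List.idxOf_of_notMem hm] at h
    have := List.count_eq_zero_of_not_mem hm
    have hlen : l.count x = 0 := this
    omega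
  have hil : l.idxOf x < l.length := List.idxOf_lt_length_iff.2 hmem
  have hct : (l.take s).count x = 1 := by
    have hle : (l.take s).count x ≤ l.count x := (List.take_sublist s l).count_le x
    have hpos : 0 < (l.take s).count x :=
      List.count_pos_iff.2 ((mem_take_iff hc).2 h)
    omega
  refine idx_eq hct (by simp; omega) ?_
  simp [List.getElem_idxOf hil]

section Pwrap
variable {γ : Type*} [DecidableEq γ]

lemma binst : (instBEqProd : BEq (γ × Bool)) = instBEqOfDecidableEq := by
  have hbeq : (instBEqProd : BEq (γ × Bool)).beq
      = (instBEqOfDecidableEq : BEq (γ × Bool)).beq := by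
    funext a b
    by_cases h : a = b
    · subst h
      have h2 : (@BEq.beq _ instBEqOfDecidableEq a a) = true := by
        simp [instBEqOfDecidableEq]
      have h1 : (@BEq.beq _ instBEqProd a a) = true := by simp
      rw [h1, h2]
    · have h2 : (@BEq.beq _ instBEqOfDecidableEq a b) = false := by
        simp [instBEqOfDecidableEq, h]
      have h1 : (@BEq.beq _ instBEqProd a b) = false := by simp [h]
      rw [h1, h2]
  exact congrArg BEq.mk hbeq

lemma idx_eqP {l : List (γ × Bool)} {x : γ × Bool} (hc : l.count x = 1) {k : ℕ}
    (hk : k < l.length) (hx : l[k] = x) : l.idxOf x = k := by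
  rw [binst] at hc ⊢
  exact idx_eq hc hk hx

lemma mem_take_iffP {l : List (γ × Bool)} {x : γ × Bool} (hc : l.count x = 1) {s : ℕ} :
    x ∈ l.take s ↔ l.idxOf x < s := by
  rw [binst] at hc ⊢
  exact mem_take_iff hc

lemma mem_drop_iffP {l : List (γ × Bool)} {x : γ × Bool} (hc : l.count x = 1) {s : ℕ}
    (hmem : x ∈ l) : x ∈ l.drop s ↔ s ≤ l.idxOf x := by
  rw [binst] at hc ⊢
  exact mem_drop_iff hc hmem

lemma idx_dropP {l : List (γ × Bool)} {x : γ × Bool} (hc : l.count x = 1) {s : ℕ}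
    (hmem : x ∈ l) (h : s ≤ l.idxOf x) :
    (l.drop s).idxOf x = l.idxOf x - s := by
  rw [binst] at hc h ⊢
  exact idx_drop hc hmem h

lemma idx_takeP {l : List (γ × Bool)} {x : γ × Bool} (hc : l.count x = 1) {s : ℕ}
    (h : l.idxOf x < s) : (l.take s).idxOf x = l.idxOf x := by
  rw [binst] at hc h ⊢
  exact idx_take hc h

lemma indexOf_lt_lengthP {l : List (γ × Bool)} {x : γ × Bool} (h : x ∈ l) :
    l.idxOf x < l.length := by
  exact List.idxOf_lt_length_iff.2 h

lemma indexOf_of_not_memP {l : List (γ × Bool)} {x : γ × Bool} (h : x ∉ l) :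
    l.idxOf x = l.length := by
  exact List.idxOf_of_notMem h

lemma indexOf_le_lengthP {l : List (γ × Bool)} {x : γ × Bool} :
    l.idxOf x ≤ l.length := by
  exact List.idxOf_le_length

lemma indexOf_append_of_memP {l₁ l₂ : List (γ × Bool)} {x : γ × Bool} (h : x ∈ l₁) :
    (l₁ ++ l₂).idxOf x = l₁.idxOf x := by
  exact List.idxOf_append_of_mem h

lemma indexOf_append_of_not_memP {l₁ l₂ : List (γ × Bool)} {x : γ × Bool} (h : x ∉ l₁) :
    (l₁ ++ l₂).idxOf x = l₁.length + l₂.idxOf x := by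
  exact List.idxOf_append_of_notMem h

end Pwrap


lemma sum_block {α : Type*} [DecidableEq α] (q : α → ℝ) {B : List (α × Bool)}
    (h : ∀ x : α × Bool, B.count x = B.count (x.1, !x.2)) :
    (B.map (fun e => if e.2 then q e.1 else -q e.1)).sum = 0 := by
  set g : α × Bool → ℝ := fun e => if e.2 then q e.1 else -q e.1 with hg
  set σ : α × Bool → α × Bool := fun e => (e.1, !e.2) with hσ
  have hσσ : ∀ x, σ (σ x) = x := by rintro ⟨a, b⟩; simp [hσ]
  have hinj : Function.Injective σ := by
    intro a b hab
    have := congrArg σ hab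
    rwa [hσσ, hσσ] at this
  have hM : (B : Multiset (α × Bool)).map σ = (B : Multiset (α × Bool)) := by
    ext x
    conv_lhs => rw [← hσσ x]
    rw [Multiset.count_map_eq_count' σ _ hinj]
    simp only [Multiset.coe_count]
    have hcc : ∀ (y : α × Bool) (L : List (α × Bool)),
        List.count y L = @List.count _ instBEqOfDecidableEq y L := by
      intro y L
      induction L with
      | nil => rfl
      | cons a t ih =>
        rw [List.count_cons, @List.count_cons _ instBEqOfDecidableEq, ih]
        by_cases hay : a = y
        · subst hay
          have h1 : (a == a) = true := by simp
          have h2 : (@BEq.beq _ instBEqOfDecidableEq a a) = true := by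
            simp [instBEqOfDecidableEq]
          simp [h1, h2]
        · have h1 : (a == y) = false := by simp [hay]
          have h2 : (@BEq.beq _ instBEqOfDecidableEq a y) = false := by
            simp [instBEqOfDecidableEq, hay]
          simp [h1, h2]
    rw [← hcc, ← hcc]
    exact (h x).symm
  have hgs : ∀ x, g (σ x) = -(g x) := by
    rintro ⟨a, b⟩; cases b <;> simp [hg, hσ]
  have key : ((B : Multiset (α × Bool)).map g).sum = -(((B : Multiset (α × Bool)).map g).sum) := by
    conv_lhs => rw [← hM]
    rw [Multiset.map_map]
    have h1 : g ∘ σ = fun x => -(g x) := funext hgs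
    rw [h1]
    exact Multiset.sum_map_neg
  have h0 : ((B : Multiset (α × Bool)).map g).sum = 0 := by linarith
  simpa using h0

lemma prefLoad_append (q : γ → ℝ) (l₁ l₂ : List (γ × Bool)) (p : ℕ) :
    prefLoad q (l₁ ++ l₂) p = prefLoad q l₁ p + prefLoad q l₂ (p - l₁.length) := by
  unfold prefLoad
  rw [List.take_append, List.map_append, List.sum_append]

lemma prefLoad_of_le (q : γ → ℝ) {l : List (γ × Bool)} {p : ℕ} (h : l.length ≤ p) :
    prefLoad q l p = (l.map (fun e => if e.2 then q e.1 else -q e.1)).sum := by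
  unfold prefLoad
  rw [List.take_of_length_le h]

end Stmt7

/-- Removing a block (the contiguous subsequence from order `o`'s pickup to
its own delivery, with all events in between) from a route satisfying the LIFO and
capacity constraints yields a route again satisfying the LIFO and capacity constraints,
provided the block is well-formed: every order with an event inside the block has both
its pickup and its delivery inside the block. -/
theorem stmt_7 {α : Type*} [DecidableEq α] (q : α → ℝ) (hq : ∀ o, 0 < q o)
    (route : List (α × Bool))
    (h_pick : ∀ o : α, route.count (o, true) = 1)
    (h_del : ∀ o : α, route.count (o, false) = 1)
    (h_ord : ∀ o : α, route.idxOf (o, true) < route.idxOf (o, false))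
    (Q : ℝ) (h_lifo : LIFOCond route) (hcap : CapacityOK q route Q)
    (o : α)
    (h_wf : ∀ a : α, ∀ b : Bool,
      route.idxOf (o, true) ≤ route.idxOf (a, b) →
      route.idxOf (a, b) ≤ route.idxOf (o, false) →
      route.idxOf (o, true) ≤ route.idxOf (a, !b) ∧
      route.idxOf (a, !b) ≤ route.idxOf (o, false)) :
    LIFOCond (route.take (route.idxOf (o, true)) ++
        route.drop (route.idxOf (o, false) + 1)) ∧
    CapacityOK q (route.take (route.idxOf (o, true)) ++
        route.drop (route.idxOf (o, false) + 1)) Q := by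
  classical
  open Stmt7 in
  set s := route.idxOf (o, true) with hs
  set e := route.idxOf (o, false) with he
  have hcount : ∀ x : α × Bool, route.count x = 1 := by
    rintro ⟨a, b⟩; cases b
    · exact h_del a
    · exact h_pick a
  have hmem : ∀ x : α × Bool, x ∈ route := by
    intro x
    have := hcount x
    exact List.count_pos_iff.1 (by omega)
  have hidx : ∀ x : α × Bool, route.idxOf x < route.length :=
    fun x => indexOf_lt_lengthP (hmem x)
  have hse : s < e := h_ord o
  have hen : e < route.length := hidx (o, false)
  set T := route.take s with hT
  set D := route.drop (e + 1) with hD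
  set B := (route.drop s).take (e + 1 - s) with hBdef
  have hTlen : T.length = s := by
    rw [hT, List.length_take]
    omega
  have hBlen : B.length = e + 1 - s := by
    rw [hBdef, List.length_take, List.length_drop]
    omega
  have hroute : route = T ++ (B ++ D) := by
    conv_lhs => rw [← List.take_append_drop s route]
    rw [hT]
    congr 1
    conv_lhs => rw [← List.take_append_drop (e + 1 - s) (route.drop s)]
    rw [hBdef, hD]
    congr 1
    rw [List.drop_drop]
    congr 1
    omega
  -- index characterizations in T ++ D
  have hA2 : ∀ x : α × Bool, s ≤ route.idxOf x → route.idxOf x ≤ e → x ∉ T ++ D := by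
    intro x h1 h2 hx
    rcases List.mem_append.1 hx with hx | hx
    · have := (mem_take_iffP (hcount x)).1 hx
      omega
    · have := (mem_drop_iffP (hcount x) (hmem x)).1 hx
      omega
  set f : ℕ → ℕ := fun p => if p < s then p else p - (e + 1 - s) with hf
  have hIdx : ∀ x : α × Bool, (route.idxOf x < s ∨ e < route.idxOf x) →
      (T ++ D).idxOf x = f (route.idxOf x) := by
    intro x hx
    rcases hx with hx | hx
    · rw [indexOf_append_of_memP ((mem_take_iffP (hcount x)).2 hx)]
      rw [idx_takeP (hcount x) hx, hf]
      simp [hx]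
    · have hnT : x ∉ T := by
        intro hmT
        have := (mem_take_iffP (hcount x)).1 hmT
        omega
      rw [indexOf_append_of_not_memP hnT, hTlen,
        idx_dropP (hcount x) (hmem x) (by omega), hf]
      simp only []
      rw [if_neg (by omega)]
      omega
  have fmono : ∀ p₁ p₂ : ℕ, (p₁ < s ∨ e < p₁) → (p₂ < s ∨ e < p₂) → p₁ ≤ p₂ →
      f p₁ ≤ f p₂ := by
    intro p₁ p₂ h1 h2 h12
    simp only [hf]
    split_ifs <;> omega
  -- well-formedness both ways
  have hwf' : ∀ x : α × Bool, (route.idxOf x < s ∨ e < route.idxOf x) →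
      (route.idxOf (x.1, !x.2) < s ∨ e < route.idxOf (x.1, !x.2)) := by
    rintro ⟨a, b⟩ hx
    by_contra hcon
    push_neg at hcon
    obtain ⟨h1, h2⟩ := h_wf a (!b) hcon.1 hcon.2
    rw [Bool.not_not] at h1 h2
    omega
  constructor
  · -- LIFO
    intro i j hij
    by_cases hj : route.idxOf (j, true) < s ∨ e < route.idxOf (j, true)
    · have hjv := hIdx (j, true) hj
      have hi : route.idxOf (i, true) < s ∨ e < route.idxOf (i, true) := by
        by_contra hcon
        push_neg at hcon
        have hni := hA2 (i, true) hcon.1 hcon.2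
        rw [indexOf_of_not_memP hni] at hij
        have := indexOf_le_lengthP (x := (j, true)) (l := T ++ D)
        omega
      have hiv := hIdx (i, true) hi
      have hi2 : route.idxOf (i, false) < s ∨ e < route.idxOf (i, false) := by
        have := hwf' (i, true) hi
        simpa using this
      have hj2 : route.idxOf (j, false) < s ∨ e < route.idxOf (j, false) := by
        have := hwf' (j, true) hj
        simpa using this
      have horder : route.idxOf (i, true) < route.idxOf (j, true) := by
        by_contra hle
        push_neg at hle
        have := fmono _ _ hj hi hle
        rw [hiv, hjv] at hij
        omega
      rcases h_lifo i j horder with hc | hc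
      · left
        rw [hIdx (i, false) hi2, hjv]
        exact fmono _ _ hi2 hj hc
      · right
        rw [hIdx (j, false) hj2, hIdx (i, false) hi2]
        exact fmono _ _ hj2 hi2 hc
    · push_neg at hj
      left
      rw [indexOf_of_not_memP (hA2 (j, true) hj.1 hj.2)]
      exact indexOf_le_lengthP
  · -- Capacity
    have hmemB : ∀ x : α × Bool, x ∈ B ↔ s ≤ route.idxOf x ∧ route.idxOf x ≤ e := by
      intro x
      constructor
      · intro hx
        obtain ⟨k, hk, hxk⟩ := List.getElem_of_mem hx
        rw [hBlen] at hk
        have hk' : s + k < route.length := by omega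
        have hxx : route[s + k] = x := by
          have hBk : B[k]'(by rw [hBlen]; omega) = route[s + k] := by
            simp [hBdef]
          rw [← hxk]
          exact hBk.symm
        have := idx_eqP (hcount x) hk' hxx
        omega
      · rintro ⟨h1, h2⟩
        have hcd : (route.drop s).count x = 1 := by
          have hle : (route.drop s).count x ≤ route.count x :=
            (List.drop_sublist s route).count_le x
          have hpos : 0 < (route.drop s).count x :=
            List.count_pos_iff.2 ((mem_drop_iffP (hcount x) (hmem x)).2 h1)
          have := hcount x
          omega
        rw [hBdef]
        refine (mem_take_iffP hcd).2 ?_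
        rw [idx_dropP (hcount x) (hmem x) h1]
        omega
    have hcnt : ∀ x : α × Bool, B.count x = B.count (x.1, !x.2) := by
      intro x
      have hsub : B.Sublist route := by
        rw [hBdef]
        exact (List.take_sublist _ _).trans (List.drop_sublist _ _)
      have hb1 : B.count x ≤ 1 := le_trans (hsub.count_le x) (hcount x).le
      have hb2 : B.count (x.1, !x.2) ≤ 1 :=
        le_trans (hsub.count_le _) (hcount _).le
      by_cases hx : x ∈ B
      · obtain ⟨h1, h2⟩ := (hmemB x).1 hx
        obtain ⟨h1', h2'⟩ := h_wf x.1 x.2 h1 h2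
        have hx' : (x.1, !x.2) ∈ B := (hmemB _).2 ⟨h1', h2'⟩
        have c1 : 0 < B.count x := List.count_pos_iff.2 hx
        have c2 : 0 < B.count (x.1, !x.2) := List.count_pos_iff.2 hx'
        omega
      · have hx' : (x.1, !x.2) ∉ B := by
          intro hmm
          obtain ⟨h1, h2⟩ := (hmemB _).1 hmm
          obtain ⟨h1', h2'⟩ := h_wf x.1 (!x.2) h1 h2
          rw [Bool.not_not] at h1' h2'
          exact hx ((hmemB x).2 ⟨h1', h2'⟩)
        rw [List.count_eq_zero_of_not_mem hx, List.count_eq_zero_of_not_mem hx']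
    have hBsum : (B.map (fun ev => if ev.2 then q ev.1 else -q ev.1)).sum = 0 :=
      sum_block q hcnt
    intro p
    by_cases hp : p ≤ s
    · have heq : prefLoad q (T ++ D) p = prefLoad q route p := by
        unfold prefLoad
        rw [List.take_append, hTlen, Nat.sub_eq_zero_of_le hp,
          List.take_zero, List.append_nil, hT, List.take_take, min_eq_left hp]
      rw [heq]
      exact hcap p
    · push_neg at hp
      have key : prefLoad q (T ++ D) p = prefLoad q route (p + (e + 1 - s)) := by
        rw [prefLoad_append, hTlen]
        conv_rhs => rw [hroute]
        rw [prefLoad_append, hTlen, prefLoad_append, hBlen]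
        have e1 : prefLoad q T p = prefLoad q T (p + (e + 1 - s)) := by
          rw [prefLoad_of_le q (by omega : T.length ≤ p),
            prefLoad_of_le q (by omega : T.length ≤ p + (e + 1 - s))]
        have e2 : prefLoad q B (p + (e + 1 - s) - s) = 0 := by
          rw [prefLoad_of_le q (by omega : B.length ≤ p + (e + 1 - s) - s)]
          exact hBsum
        have e3 : p + (e + 1 - s) - s - (e + 1 - s) = p - s := by omega
        rw [e1, e2, e3]
        ring
      rw [key]
      exact hcap _
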